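/- Let p and p̃ be design measures on the design points x_1, …, x_n ∈ ℝ^q with both H(p) and H(p̃) positive definite, and let t ∈ [0,1). Then for every 0 < ε < 1, −tr{H((1−ε)p + εp̃)}⁻¹ ≥ (1−ε)·(−tr{H(p)}⁻¹) + ε·(−tr{H(p̃)}⁻¹); that is, the A-criterion φ_A(p) = −tr{H(p)}⁻¹ is concave in the design measure p. -/

import Mathlib

open Matrix BigOperators Finset

noncomputable section

/-- A design measure: nonnegative masses summing to 1. -/
def designMeasure {n : ℕ} (p : Fin n → ℝ) : Prop :=
  (∀ i, 0 ≤ p i) ∧ ∑ i, p i = 1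

/-- G(p) = Σ pᵢ xᵢ xᵢᵀ. -/
def Gmat {q n : ℕ} (x : Fin n → Fin q → ℝ) (p : Fin n → ℝ) : Matrix (Fin q) (Fin q) ℝ :=
  ∑ i, p i • Matrix.vecMulVec (x i) (x i)

/-- g(p) = Σ pᵢ xᵢ. -/
def gvec {q n : ℕ} (x : Fin n → Fin q → ℝ) (p : Fin n → ℝ) : Fin q → ℝ :=
  ∑ i, p i • x i

/-- H(p) = G(p) − t g(p) g(p)ᵀ. -/
def Hmat {q n : ℕ} (t : ℝ) (x : Fin n → Fin q → ℝ) (p : Fin n → ℝ) : Matrix (Fin q) (Fin q) ℝ :=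
  Gmat x p - t • Matrix.vecMulVec (gvec x p) (gvec x p)

/-- ψ_{Di}(p). -/
def psiD {q n : ℕ} (t : ℝ) (x : Fin n → Fin q → ℝ) (p : Fin n → ℝ) (i : Fin n) : ℝ :=
  (1 - t) * (x i ⬝ᵥ ((Hmat t x p)⁻¹ *ᵥ x i))
    + t * ((x i - gvec x p) ⬝ᵥ ((Hmat t x p)⁻¹ *ᵥ (x i - gvec x p)))

/-- ψ_{Ai}(p). -/
def psiA {q n : ℕ} (t : ℝ) (x : Fin n → Fin q → ℝ) (p : Fin n → ℝ) (i : Fin n) : ℝ :=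
  (1 - t) * (x i ⬝ᵥ (((Hmat t x p)⁻¹ * (Hmat t x p)⁻¹) *ᵥ x i))
    + t * ((x i - gvec x p) ⬝ᵥ (((Hmat t x p)⁻¹ * (Hmat t x p)⁻¹) *ᵥ (x i - gvec x p)))

end

section Aux
variable {q : ℕ}

lemma real_posDef_iff {X : Matrix (Fin q) (Fin q) ℝ} :
    X.PosDef ↔ X.IsHermitian ∧ ∀ v : Fin q → ℝ, v ≠ 0 → 0 < v ⬝ᵥ (X *ᵥ v) := by
  constructor
  · intro h; have h' := posDef_iff_dotProduct_mulVec.mp h; exact ⟨h'.1, fun v hv => by simpa using h'.2 hv⟩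
  · rintro ⟨h1, h2⟩; exact posDef_iff_dotProduct_mulVec.mpr ⟨h1, fun v hv => by simpa using h2 v hv⟩

lemma real_posSemidef_quad {X : Matrix (Fin q) (Fin q) ℝ} (h : X.PosSemidef)
    (v : Fin q → ℝ) : 0 ≤ v ⬝ᵥ (X *ᵥ v) := by simpa using h.dotProduct_mulVec_nonneg v

lemma smul_posDef {c : ℝ} (hc : 0 < c) {A : Matrix (Fin q) (Fin q) ℝ} (hA : A.PosDef) :
    (c • A).PosDef := by
  rw [real_posDef_iff]
  refine ⟨?_, fun v hv => ?_⟩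
  · have h : Aᵀ = A := by
      ext i j
      have := congrFun (congrFun hA.isHermitian.eq i) j
      simpa [conjTranspose_apply] using this
    unfold Matrix.IsHermitian
    rw [conjTranspose_smul]
    ext i j
    simp [conjTranspose_apply, h]
  · rw [smul_mulVec, dotProduct_smul, smul_eq_mul]
    have := (real_posDef_iff.mp hA).2 v hv
    positivity

lemma vecMulVec_mulVec' (a b y : Fin q → ℝ) :
    Matrix.vecMulVec a b *ᵥ y = (b ⬝ᵥ y) • a := by
  ext i
  simp [Matrix.mulVec, Matrix.vecMulVec_apply, dotProduct, Finset.mul_sum, mul_comm, mul_assoc, mul_left_comm]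

lemma smul_vecMulVec_posSemidef {c : ℝ} (hc : 0 ≤ c) (d : Fin q → ℝ) :
    (c • Matrix.vecMulVec d d).PosSemidef := by
  refine posSemidef_iff_dotProduct_mulVec.mpr ⟨?_, ?_⟩
  · unfold Matrix.IsHermitian
    rw [conjTranspose_smul]
    congr 1
    ext i j
    simp [Matrix.vecMulVec_apply, mul_comm]
  · intro y
    simp only [star_trivial, smul_mulVec, dotProduct_smul, smul_eq_mul,
      vecMulVec_mulVec', dotProduct_comm d y]
    exact mul_nonneg hc (mul_self_nonneg _)

lemma herm_transpose_eq {X : Matrix (Fin q) (Fin q) ℝ} (h : X.IsHermitian) : Xᵀ = X := by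
  ext i j
  have := congrFun (congrFun h.eq i) j
  simpa [conjTranspose_apply] using this

lemma quad_le_inv {X : Matrix (Fin q) (Fin q) ℝ} (hX : X.PosDef) (u v : Fin q → ℝ) :
    2 * (u ⬝ᵥ v) - u ⬝ᵥ (X *ᵥ u) ≤ v ⬝ᵥ (X⁻¹ *ᵥ v) := by
  have hdet : IsUnit X.det := isUnit_iff_ne_zero.mpr hX.det_pos.ne'
  have hXw : X *ᵥ (X⁻¹ *ᵥ v) = v := by
    rw [Matrix.mulVec_mulVec, Matrix.mul_nonsing_inv _ hdet, Matrix.one_mulVec]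
  set w := X⁻¹ *ᵥ v with hw
  have h0 := real_posSemidef_quad hX.posSemidef (u - w)
  have hsym : w ⬝ᵥ (X *ᵥ u) = v ⬝ᵥ u := by
    rw [Matrix.dotProduct_mulVec, ← Matrix.mulVec_transpose, herm_transpose_eq hX.isHermitian,
      hXw]
  have h1 : u ⬝ᵥ (X *ᵥ w) = u ⬝ᵥ v := by rw [hXw]
  have h2 : w ⬝ᵥ (X *ᵥ w) = w ⬝ᵥ v := by rw [hXw]
  rw [Matrix.mulVec_sub, sub_dotProduct, dotProduct_sub, dotProduct_sub]
    at h0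
  have hc1 : v ⬝ᵥ u = u ⬝ᵥ v := dotProduct_comm _ _
  have hc2 : w ⬝ᵥ v = v ⬝ᵥ w := dotProduct_comm _ _
  linarith

lemma quad_mix_le {A B M : Matrix (Fin q) (Fin q) ℝ} (hA : A.PosDef) (hB : B.PosDef)
    {ε : ℝ} (hε0 : 0 < ε) (hε1 : ε < 1)
    (hdiff : (M - ((1 - ε) • A + ε • B)).PosSemidef) (v : Fin q → ℝ) :
    v ⬝ᵥ (M⁻¹ *ᵥ v) ≤ (1 - ε) * (v ⬝ᵥ (A⁻¹ *ᵥ v)) + ε * (v ⬝ᵥ (B⁻¹ *ᵥ v)) := by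
  have hMpd : M.PosDef := by
    have : M = ((1 - ε) • A + ε • B) + (M - ((1 - ε) • A + ε • B)) := by abel
    rw [this]
    exact Matrix.PosDef.add_posSemidef
      ((smul_posDef (by linarith) hA).add (smul_posDef hε0 hB)) hdiff
  have hdet : IsUnit M.det := isUnit_iff_ne_zero.mpr hMpd.det_pos.ne'
  set u := M⁻¹ *ᵥ v with hu
  have hMu : M *ᵥ u = v := by
    rw [hu, Matrix.mulVec_mulVec, Matrix.mul_nonsing_inv _ hdet, Matrix.one_mulVec]
  have h0 := real_posSemidef_quad hdiff (u)
  rw [Matrix.sub_mulVec, dotProduct_sub, Matrix.add_mulVec, dotProduct_add,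
    smul_mulVec, smul_mulVec, dotProduct_smul, dotProduct_smul] at h0
  have hqA := quad_le_inv hA u v
  have hqB := quad_le_inv hB u v
  have hvu : v ⬝ᵥ u = u ⬝ᵥ v := dotProduct_comm _ _
  have huMu : u ⬝ᵥ (M *ᵥ u) = u ⬝ᵥ v := by rw [hMu]
  simp only [smul_eq_mul] at h0
  nlinarith [mul_le_mul_of_nonneg_left hqA (by linarith : (0:ℝ) ≤ 1 - ε),
    mul_le_mul_of_nonneg_left hqB hε0.le]

lemma trace_inv_mix_le {A B M : Matrix (Fin q) (Fin q) ℝ} (hA : A.PosDef) (hB : B.PosDef)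
    {ε : ℝ} (hε0 : 0 < ε) (hε1 : ε < 1)
    (hdiff : (M - ((1 - ε) • A + ε • B)).PosSemidef) :
    (M⁻¹).trace ≤ (1 - ε) * (A⁻¹).trace + ε * (B⁻¹).trace := by
  have key : ∀ (N : Matrix (Fin q) (Fin q) ℝ) (j : Fin q),
      N j j = (Pi.single j 1 : Fin q → ℝ) ⬝ᵥ (N *ᵥ Pi.single j 1) := by
    intro N j
    rw [Matrix.mulVec_single, single_dotProduct]
    simp
  have h : ∀ j : Fin q, (M⁻¹) j j ≤ (1 - ε) * (A⁻¹) j j + ε * (B⁻¹) j j := by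
    intro j
    rw [key M⁻¹ j, key A⁻¹ j, key B⁻¹ j]
    exact quad_mix_le hA hB hε0 hε1 hdiff _
  unfold Matrix.trace Matrix.diag
  calc ∑ j, (M⁻¹) j j ≤ ∑ j, ((1 - ε) * (A⁻¹) j j + ε * (B⁻¹) j j) :=
        Finset.sum_le_sum fun j _ => h j
    _ = (1 - ε) * ∑ j, (A⁻¹) j j + ε * ∑ j, (B⁻¹) j j := by
        rw [Finset.sum_add_distrib, Finset.mul_sum, Finset.mul_sum]

lemma gvec_apply {q n : ℕ} (x : Fin n → Fin q → ℝ) (p : Fin n → ℝ) (a : Fin q) :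
    gvec x p a = ∑ i, p i * x i a := by
  simp [gvec, Finset.sum_apply]

lemma Gmat_apply {q n : ℕ} (x : Fin n → Fin q → ℝ) (p : Fin n → ℝ) (a b : Fin q) :
    Gmat x p a b = ∑ i, p i * (x i a * x i b) := by
  simp [Gmat, Matrix.sum_apply, Matrix.vecMulVec_apply]

lemma Hmat_apply {q n : ℕ} (t : ℝ) (x : Fin n → Fin q → ℝ) (p : Fin n → ℝ) (a b : Fin q) :
    Hmat t x p a b = Gmat x p a b - t * (gvec x p a * gvec x p b) := by
  simp [Hmat, Matrix.sub_apply, Matrix.smul_apply, Matrix.vecMulVec_apply, mul_assoc]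

lemma gvec_mix {q n : ℕ} (x : Fin n → Fin q → ℝ) (p pt : Fin n → ℝ) (ε : ℝ) (a : Fin q) :
    gvec x ((1 - ε) • p + ε • pt) a = (1 - ε) * gvec x p a + ε * gvec x pt a := by
  simp only [gvec_apply, Pi.add_apply, Pi.smul_apply, smul_eq_mul, add_mul,
    Finset.sum_add_distrib, Finset.mul_sum, mul_assoc]

lemma Gmat_mix {q n : ℕ} (x : Fin n → Fin q → ℝ) (p pt : Fin n → ℝ) (ε : ℝ) (a b : Fin q) :
    Gmat x ((1 - ε) • p + ε • pt) a b = (1 - ε) * Gmat x p a b + ε * Gmat x pt a b := by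
  simp only [Gmat_apply, Pi.add_apply, Pi.smul_apply, smul_eq_mul, add_mul,
    Finset.sum_add_distrib, Finset.mul_sum, mul_assoc]

lemma Hmix_diff {q n : ℕ} (t : ℝ) (x : Fin n → Fin q → ℝ) (p pt : Fin n → ℝ) (ε : ℝ) :
    Hmat t x ((1 - ε) • p + ε • pt) - ((1 - ε) • Hmat t x p + ε • Hmat t x pt)
      = (t * ε * (1 - ε)) • Matrix.vecMulVec (gvec x p - gvec x pt) (gvec x p - gvec x pt) := by
  ext a b
  simp only [Matrix.sub_apply, Matrix.add_apply, Matrix.smul_apply, smul_eq_mul,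
    Matrix.vecMulVec_apply, Pi.sub_apply, Hmat_apply, Gmat_mix, gvec_mix]
  ring

end Aux

theorem statement_2 {q n : ℕ} (hq : 1 ≤ q) (hn : 1 ≤ n)
    (x : Fin n → Fin q → ℝ) (t : ℝ) (ht0 : 0 ≤ t) (ht1 : t < 1)
    (p ptilde : Fin n → ℝ) (hp : designMeasure p) (hpt : designMeasure ptilde)
    (hHp : (Hmat t x p).PosDef) (hHpt : (Hmat t x ptilde).PosDef)
    (ε : ℝ) (hε0 : 0 < ε) (hε1 : ε < 1) :
    -Matrix.trace ((Hmat t x ((1 - ε) • p + ε • ptilde))⁻¹)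
      ≥ (1 - ε) * (-Matrix.trace ((Hmat t x p)⁻¹))
        + ε * (-Matrix.trace ((Hmat t x ptilde)⁻¹)) := by
  set A := Hmat t x p
  set B := Hmat t x ptilde
  set M := Hmat t x ((1 - ε) • p + ε • ptilde)
  have hdiff : (M - ((1 - ε) • A + ε • B)).PosSemidef := by
    rw [show M - ((1 - ε) • A + ε • B) = (t * ε * (1 - ε)) •
        Matrix.vecMulVec (gvec x p - gvec x ptilde) (gvec x p - gvec x ptilde) from
      Hmix_diff t x p ptilde ε]
    exact smul_vecMulVec_posSemidef
      (by have : (0:ℝ) ≤ 1 - ε := by linarith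
          positivity) _
  have := trace_inv_mix_le hHp hHpt hε0 hε1 hdiff
  linarith
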